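/- Let (T,𝐆) be a simplified clique decomposition of a directed graph of width k, and let H be its representation graph. Then the treewidth of H is at most k. -/

import Mathlib

/-- A simplified clique decomposition (scd), presented as the term generating
the final labeled graph: leaves introduce single vertices with a singleton
label, binary nodes take disjoint unions, and unary nodes add a new vertex,
unite two labels, or add all edges (arcs) between two labels. -/
inductive SCD (V : Type) where
  | leaf (v : V) : SCD V
  | union (l r : SCD V) : SCD V
  | addVertex (t : SCD V) (v : V) : SCD V
  | unite (t : SCD V) (S₁ S₂ : Finset V) : SCD V
  | addAdj (t : SCD V) (S₁ S₂ : Finset V) : SCD V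

variable {V : Type} [DecidableEq V]

/-- The vertex set of the labeled graph produced by an scd. -/
def SCD.verts : SCD V → Finset V
  | .leaf v => {v}
  | .union l r => l.verts ∪ r.verts
  | .addVertex t v => t.verts ∪ {v}
  | .unite t _ _ => t.verts
  | .addAdj t _ _ => t.verts

/-- The set of labels (the partition of the vertices) of the graph produced. -/
def SCD.labels : SCD V → Finset (Finset V)
  | .leaf v => {{v}}
  | .union l r => l.labels ∪ r.labels
  | .addVertex t v => t.labels ∪ {{v}}
  | .unite t S₁ S₂ => (t.labels \ {S₁, S₂}) ∪ {S₁ ∪ S₂}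
  | .addAdj t _ _ => t.labels

/-- Well-formedness of an scd: unions are of vertex-disjoint graphs, added
vertices are new, and the unite/new-adjacency operations are applied to two
distinct existing labels. -/
def SCD.WF : SCD V → Prop
  | .leaf _ => True
  | .union l r => l.WF ∧ r.WF ∧ Disjoint l.verts r.verts
  | .addVertex t v => t.WF ∧ v ∉ t.verts
  | .unite t S₁ S₂ => t.WF ∧ S₁ ∈ t.labels ∧ S₂ ∈ t.labels ∧ S₁ ≠ S₂
  | .addAdj t S₁ S₂ => t.WF ∧ S₁ ∈ t.labels ∧ S₂ ∈ t.labels ∧ S₁ ≠ S₂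

/-- The set 𝐒(T,𝐆) of all labels appearing at any node of the decomposition. -/
def SCD.allLabels : SCD V → Finset (Finset V)
  | .leaf v => {{v}}
  | .union l r => l.allLabels ∪ r.allLabels
  | .addVertex t v => t.allLabels ∪ {{v}}
  | .unite t S₁ S₂ => t.allLabels ∪ {S₁ ∪ S₂}
  | .addAdj t _ _ => t.allLabels

/-- `T.isChild S₁ S₂`: the label `S₂` was created by uniting `S₁` with another
label somewhere in the decomposition (so `S₁` is a child of `S₂`). -/
def SCD.isChild : SCD V → Finset V → Finset V → Prop
  | .leaf _ => fun _ _ => False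
  | .union l r => fun A B => l.isChild A B ∨ r.isChild A B
  | .addVertex t _ => t.isChild
  | .unite t S₁ S₂ => fun A B => t.isChild A B ∨ ((A = S₁ ∨ A = S₂) ∧ B = S₁ ∪ S₂)
  | .addAdj t _ _ => t.isChild

/-- `T.isAdjArc S₁ S₂`: the new-adjacency operation was applied somewhere in the
decomposition, introducing all arcs from the label `S₁` to the label `S₂`. -/
def SCD.isAdjArc : SCD V → Finset V → Finset V → Prop
  | .leaf _ => fun _ _ => False
  | .union l r => fun A B => l.isAdjArc A B ∨ r.isAdjArc A B
  | .addVertex t _ => t.isAdjArc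
  | .unite t _ _ => t.isAdjArc
  | .addAdj t S₁ S₂ => fun A B => t.isAdjArc A B ∨ (A = S₁ ∧ B = S₂)

/-- The width of an scd: the maximum number of labels of any graph `G(t)`. -/
def SCD.width : SCD V → ℕ
  | .leaf _ => 1
  | .union l r => max (max l.width r.width) ((l.labels ∪ r.labels).card)
  | .addVertex t v => max t.width ((t.labels ∪ {{v}}).card)
  | .unite t S₁ S₂ => max t.width (((t.labels \ {S₁, S₂}) ∪ {S₁ ∪ S₂}).card)
  | .addAdj t _ _ => t.width

/-- Adjacency in the representation graph `H` of the scd: two distinct labels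
are adjacent iff one is a child of the other or the new-adjacency operation was
applied to the pair. -/
def repAdj (T : SCD V) (A B : Finset V) : Prop :=
  A ≠ B ∧ (T.isChild A B ∨ T.isChild B A ∨ T.isAdjArc A B ∨ T.isAdjArc B A)



section RepresentationAux

open SimpleGraph

variable {ι κ ι₀ ι₁ ι₂ : Type}



lemma walk_pullback {f : ι ↪ κ} {G : SimpleGraph ι} {H : SimpleGraph κ}
    (hfwd : ∀ a b, G.Adj a b → H.Adj (f a) (f b))
    (hrefl : ∀ a b, H.Adj (f a) b → ∃ c, b = f c ∧ G.Adj a c) :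
    ∀ {u v : κ} (p : H.Walk u v) (a : ι) (ha : u = f a),
      ∃ (b : ι) (hb : f b = v) (q : G.Walk a b),
        q.map ⟨f, fun h => hfwd _ _ h⟩ = p.copy ha hb.symm := by
  intro u v p
  induction p with
  | nil =>
    intro a ha; subst ha
    exact ⟨a, rfl, SimpleGraph.Walk.nil, by simp⟩
  | @cons u w v h p ih =>
    intro a ha; subst ha
    obtain ⟨c, rfl, hac⟩ := hrefl _ _ h
    obtain ⟨b, hb, q, hq⟩ := ih c rfl
    refine ⟨b, hb, SimpleGraph.Walk.cons hac q, ?_⟩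
    subst hb
    simp only [SimpleGraph.Walk.copy_rfl_rfl] at hq ⊢
    simp [SimpleGraph.Walk.map_cons, hq]

/-- No cycle based at a vertex in the range of a closed embedding, if `G` is acyclic. -/
lemma no_cycle_of_pullback {f : ι ↪ κ} {G : SimpleGraph ι} {H : SimpleGraph κ}
    (hfwd : ∀ a b, G.Adj a b → H.Adj (f a) (f b))
    (hrefl : ∀ a b, H.Adj (f a) b → ∃ c, b = f c ∧ G.Adj a c)
    (hG : G.IsAcyclic) :
    ∀ {u : κ} (c : H.Walk u u), c.IsCycle → u ∉ Set.range f := by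
  rintro u c hc ⟨a, rfl⟩
  obtain ⟨b, hb, q, hq⟩ := walk_pullback hfwd hrefl c a rfl
  have hba := f.injective hb
  subst hba
  rw [SimpleGraph.Walk.copy_rfl_rfl] at hq
  have : q.IsCycle := by
    rw [← SimpleGraph.Walk.map_isCycle_iff_of_injective (f := ⟨f, fun h => hfwd _ _ h⟩) f.injective]
    rw [hq]; exact hc
  exact hG _ this



lemma parity_side [DecidableEq κ] {A : SimpleGraph κ} {x₀ y₀ : κ} {side : κ → Bool}
    (hside : ∀ a b, A.Adj a b → side a = side b) (hxy : side x₀ ≠ side y₀) :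
    ∀ {u v : κ} (p : (A ⊔ SimpleGraph.fromEdgeSet {s(x₀, y₀)}).Walk u v),
      (side u = side v ↔ Even (p.edges.count s(x₀, y₀))) := by
  intro u v p
  induction p with
  | nil => simp
  | @cons u w v h p ih =>
    rw [SimpleGraph.Walk.edges_cons, List.count_cons]
    rcases h with h | h
    · have hsides := hside _ _ h
      have hne : s(u, w) ≠ s(x₀, y₀) := by
        intro he
        rw [Sym2.eq_iff] at he
        rcases he with ⟨rfl, rfl⟩ | ⟨rfl, rfl⟩
        · exact hxy hsides
        · exact hxy hsides.symm
      simp only [beq_iff_eq, hne, if_false, add_zero]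
      rw [hsides]; exact ih
    · rw [SimpleGraph.fromEdgeSet_adj, Set.mem_singleton_iff] at h
      obtain ⟨he, hne⟩ := h
      have hflip : side u ≠ side w := by
        rw [Sym2.eq_iff] at he
        rcases he with ⟨rfl, rfl⟩ | ⟨rfl, rfl⟩
        · exact hxy
        · exact fun hh => hxy hh.symm
      simp only [he, beq_self_eq_true, if_true]
      rw [Nat.even_add_one, ← ih]
      cases hsu : side u <;> cases hsw : side w <;> cases hsv : side v <;> simp_all

lemma isAcyclic_sup_edge [DecidableEq κ] {A : SimpleGraph κ} {x₀ y₀ : κ} {side : κ → Bool}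
    (hside : ∀ a b, A.Adj a b → side a = side b) (hxy : side x₀ ≠ side y₀)
    (hA : A.IsAcyclic) : (A ⊔ SimpleGraph.fromEdgeSet {s(x₀, y₀)}).IsAcyclic := by
  intro u c hc
  have hcount : Even (c.edges.count s(x₀, y₀)) := (parity_side hside hxy c).mp rfl
  have hnodup : c.edges.Nodup := hc.edges_nodup
  have hle : c.edges.count s(x₀, y₀) ≤ 1 := List.nodup_iff_count_le_one.mp hnodup _
  have hzero : c.edges.count s(x₀, y₀) = 0 := by
    rcases Nat.even_iff.mp hcount with h
    omega
  have hmem : ∀ e ∈ c.edges, e ∈ A.edgeSet := by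
    intro e he
    have : e ∈ (A ⊔ SimpleGraph.fromEdgeSet {s(x₀, y₀)}).edgeSet := SimpleGraph.Walk.edges_subset_edgeSet c he
    rw [SimpleGraph.edgeSet_sup, SimpleGraph.edgeSet_fromEdgeSet] at this
    rcases this with h | ⟨h1, _⟩
    · exact h
    · exfalso
      rw [Set.mem_singleton_iff] at h1
      subst h1
      rw [← List.count_pos_iff] at he
      omega
  exact hA _ ((hc.transfer hmem))



lemma preconnected_induce_subsingleton {G : SimpleGraph κ} {s : Set κ}
    (hs : ∀ a ∈ s, ∀ b ∈ s, a = b) : (G.induce s).Preconnected := by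
  intro u v
  have : u = v := Subtype.ext (hs _ u.2 _ v.2)
  exact this ▸ SimpleGraph.Reachable.refl _

/-- Transfer preconnectedness of an induced subgraph along a map. -/
lemma preconnected_induce_image {G : SimpleGraph ι} {G' : SimpleGraph κ} {f : ι → κ}
    {s : Set ι} {t : Set κ} (hts : t = f '' s)
    (hadj : ∀ a ∈ s, ∀ b ∈ s, G.Adj a b → G'.Adj (f a) (f b))
    (h : (G.induce s).Preconnected) : (G'.induce t).Preconnected := by
  subst hts
  rintro ⟨u, hu⟩ ⟨v, hv⟩
  obtain ⟨a, ha, rfl⟩ := hu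
  obtain ⟨b, hb, rfl⟩ := hv
  let φ : G.induce s →g G'.induce (f '' s) :=
    ⟨fun x => ⟨f x.1, ⟨x.1, x.2, rfl⟩⟩, fun {x y} hxy => hadj _ x.2 _ y.2 hxy⟩
  exact (h ⟨a, ha⟩ ⟨b, hb⟩).map φ

lemma preconnected_induce_hub {G : SimpleGraph ι} {G' : SimpleGraph κ} {f : ι → κ}
    {s : Set ι} {t : Set κ} {n₀ : κ} {r : ι} (hts : t = insert n₀ (f '' s))
    (hr : r ∈ s) (hedge : G'.Adj n₀ (f r))
    (hadj : ∀ a ∈ s, ∀ b ∈ s, G.Adj a b → G'.Adj (f a) (f b))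
    (h : (G.induce s).Preconnected) : (G'.induce t).Preconnected := by
  subst hts
  have hrt : f r ∈ insert n₀ (f '' s) := Set.mem_insert_iff.mpr (Or.inr ⟨r, hr, rfl⟩)
  have hn₀ : n₀ ∈ insert n₀ (f '' s) := Set.mem_insert _ _
  have key : ∀ u : {x // x ∈ insert n₀ (f '' s)},
      (G'.induce (insert n₀ (f '' s))).Reachable u ⟨f r, hrt⟩ := by
    rintro ⟨u, hu⟩
    rcases hu with rfl | ⟨a, ha, rfl⟩
    · exact SimpleGraph.Adj.reachable (by exact hedge)
    · let φ : G.induce s →g G'.induce (insert n₀ (f '' s)) :=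
        ⟨fun x => ⟨f x.1, Set.mem_insert_iff.mpr (Or.inr ⟨x.1, x.2, rfl⟩)⟩,
          fun {x y} hxy => hadj _ x.2 _ y.2 hxy⟩
      exact (h ⟨a, ha⟩ ⟨r, hr⟩).map φ
  intro u v
  exact (key u).trans (key v).symm



lemma extend_step (G₀ : SimpleGraph ι₀) (Bag₀ : ι₀ → Finset (Finset V)) (r₀ : ι₀)
    (newBag : Finset (Finset V))
    (htree : G₀.IsTree) (hpre : ∀ S, (G₀.induce {i | S ∈ Bag₀ i}).Preconnected)
    (hnew : ∀ S ∈ newBag, S ∈ Bag₀ r₀ ∨ ∀ i, S ∉ Bag₀ i) :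
    ∃ (G : SimpleGraph (Option ι₀)) (Bag : Option ι₀ → Finset (Finset V)),
      G.IsTree ∧ Bag none = newBag ∧ (∀ i, Bag (some i) = Bag₀ i) ∧
      (∀ S, (G.induce {o | S ∈ Bag o}).Preconnected) := by
  classical
  set fs : ι₀ ↪ Option ι₀ := Function.Embedding.some with hfs
  set A : SimpleGraph (Option ι₀) := G₀.map fs with hA
  set G : SimpleGraph (Option ι₀) := A ⊔ SimpleGraph.fromEdgeSet {s(none, some r₀)} with hG
  have hmapadj : ∀ a b : ι₀, G₀.Adj a b → A.Adj (some a) (some b) := by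
    intro a b h
    exact ⟨fun he => h.ne (Option.some_injective _ he), a, b, h, rfl, rfl⟩
  have hGadj : ∀ a b : ι₀, G₀.Adj a b → G.Adj (some a) (some b) := by
    intro a b h
    exact Or.inl (hmapadj a b h)
  have hedge : G.Adj none (some r₀) := by
    refine Or.inr ?_
    rw [SimpleGraph.fromEdgeSet_adj]
    exact ⟨rfl, by simp⟩
  have hrefl : ∀ (a : ι₀) (b : Option ι₀), A.Adj (some a) b → ∃ c, b = some c ∧ G₀.Adj a c := by
    rintro a b ⟨_, x, y, hxy, hx, hy⟩
    have hx' : x = a := Option.some_injective _ hx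
    subst hx'
    exact ⟨y, hy.symm, hxy⟩
  have hAacyclic : A.IsAcyclic := by
    intro u c hc
    cases u with
    | none =>
      cases c with
      | nil => exact hc.ne_nil rfl
      | cons h p => rcases h with ⟨_, x, y, _, hx, _⟩; exact (Option.some_ne_none x hx).elim
    | some x =>
      exact no_cycle_of_pullback (f := fs) hmapadj hrefl
        (fun u c hc => (htree.IsAcyclic c hc).elim) c hc ⟨x, rfl⟩
  have htreeG : G.IsTree := by
    constructor
    · constructor
      · intro u v
        let hom : G₀ →g G := ⟨some, fun h => hGadj _ _ h⟩
        have key : ∀ u : Option ι₀, G.Reachable u none := by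
          intro u
          cases u with
          | none => exact SimpleGraph.Reachable.refl _
          | some x =>
            have h1 : G.Reachable (some x) (some r₀) := by
              have h2 := (htree.isConnected.preconnected x r₀).map hom
              have h3 : ∀ y, hom y = some y := fun _ => rfl
              rwa [h3, h3] at h2
            exact h1.trans hedge.symm.reachable
        exact (key u).trans (key v).symm
    · exact isAcyclic_sup_edge (side := Option.isSome)
        (fun a b hab => by rcases hab with ⟨_, x, y, _, rfl, rfl⟩; rfl)
        (by simp) hAacyclic
  refine ⟨G, fun o => o.elim newBag Bag₀, htreeG, rfl, fun i => rfl, ?_⟩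
  intro S
  by_cases hS : S ∈ newBag
  · rcases hnew S hS with hroot | hnone
    · refine preconnected_induce_hub (f := some) (n₀ := none) (r := r₀) ?_ hroot hedge
        (fun a _ b _ h => hGadj a b h) (hpre S)
      ext o
      cases o with
      | none => simp [hS]
      | some i => simp
    · refine preconnected_induce_subsingleton ?_
      rintro a ha b hb
      cases a with
      | none => cases b with
        | none => rfl
        | some j => exact (hnone j hb).elim
      | some i => exact (hnone i ha).elim
  · refine preconnected_induce_image (f := some) ?_ (fun a _ b _ h => hGadj a b h) (hpre S)
    ext o
    cases o with
    | none => simp [hS]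
    | some i => simp



lemma link_step (G₁ : SimpleGraph ι₁) (G₂ : SimpleGraph ι₂)
    (Bag₁ : ι₁ → Finset (Finset V)) (Bag₂ : ι₂ → Finset (Finset V)) (r₁ : ι₁) (r₂ : ι₂)
    (htree₁ : G₁.IsTree) (htree₂ : G₂.IsTree)
    (hpre₁ : ∀ S, (G₁.induce {i | S ∈ Bag₁ i}).Preconnected)
    (hpre₂ : ∀ S, (G₂.induce {j | S ∈ Bag₂ j}).Preconnected)
    (hdisj : ∀ (S : Finset V) (i : ι₁) (j : ι₂), S ∈ Bag₁ i → S ∈ Bag₂ j → False) :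
    ∃ (G : SimpleGraph (ι₁ ⊕ ι₂)) (Bag : ι₁ ⊕ ι₂ → Finset (Finset V)),
      G.IsTree ∧ Bag (Sum.inl r₁) = Bag₁ r₁ ∪ Bag₂ r₂ ∧
      (∀ i, Bag (Sum.inl i) = Bag₁ i ∨ (i = r₁ ∧ Bag (Sum.inl i) = Bag₁ r₁ ∪ Bag₂ r₂)) ∧
      (∀ j, Bag (Sum.inr j) = Bag₂ j) ∧
      (∀ S, (G.induce {o | S ∈ Bag o}).Preconnected) := by
  classical
  set A : SimpleGraph (ι₁ ⊕ ι₂) :=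
    G₁.map (⟨Sum.inl, Sum.inl_injective⟩ : ι₁ ↪ ι₁ ⊕ ι₂) ⊔ G₂.map (⟨Sum.inr, Sum.inr_injective⟩ : ι₂ ↪ ι₁ ⊕ ι₂) with hA
  set G : SimpleGraph (ι₁ ⊕ ι₂) :=
    A ⊔ SimpleGraph.fromEdgeSet {s(Sum.inl r₁, Sum.inr r₂)} with hG
  have hadj₁ : ∀ a b : ι₁, G₁.Adj a b → G.Adj (Sum.inl a) (Sum.inl b) :=
    fun a b h => Or.inl (Or.inl ⟨Sum.inl_injective.ne h.ne, a, b, h, rfl, rfl⟩)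
  have hadj₂ : ∀ a b : ι₂, G₂.Adj a b → G.Adj (Sum.inr a) (Sum.inr b) :=
    fun a b h => Or.inl (Or.inr ⟨Sum.inr_injective.ne h.ne, a, b, h, rfl, rfl⟩)
  have hedge : G.Adj (Sum.inl r₁) (Sum.inr r₂) := by
    refine Or.inr ?_
    rw [SimpleGraph.fromEdgeSet_adj]
    exact ⟨rfl, by simp⟩
  have hAacyclic : A.IsAcyclic := by
    intro u c hc
    cases u with
    | inl x =>
      refine no_cycle_of_pullback (f := ⟨Sum.inl, Sum.inl_injective⟩)
        (fun a b h => Or.inl ⟨Sum.inl_injective.ne h.ne, a, b, h, rfl, rfl⟩) ?_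
        (fun u c hc => (htree₁.IsAcyclic c hc).elim) c hc ⟨x, rfl⟩
      rintro a b (⟨_, x, y, hxy, hx, hy⟩ | ⟨_, x, y, hxy, hx, hy⟩)
      · have hx' : x = a := Sum.inl_injective hx
        subst hx'
        exact ⟨y, hy.symm, hxy⟩
      · exact absurd hx (by simp)
    | inr x =>
      refine no_cycle_of_pullback (f := ⟨Sum.inr, Sum.inr_injective⟩)
        (fun a b h => Or.inr ⟨Sum.inr_injective.ne h.ne, a, b, h, rfl, rfl⟩) ?_
        (fun u c hc => (htree₂.IsAcyclic c hc).elim) c hc ⟨x, rfl⟩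
      rintro a b (⟨_, x, y, hxy, hx, hy⟩ | ⟨_, x, y, hxy, hx, hy⟩)
      · exact absurd hx (by simp)
      · have hx' : x = a := Sum.inr_injective hx
        subst hx'
        exact ⟨y, hy.symm, hxy⟩
  have htreeG : G.IsTree := by
    haveI : Nonempty (ι₁ ⊕ ι₂) := ⟨Sum.inl r₁⟩
    constructor
    · constructor
      · intro u v
        let hom₁ : G₁ →g G := ⟨Sum.inl, fun h => hadj₁ _ _ h⟩
        let hom₂ : G₂ →g G := ⟨Sum.inr, fun h => hadj₂ _ _ h⟩
        have key : ∀ u : ι₁ ⊕ ι₂, G.Reachable u (Sum.inl r₁) := by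
          intro u
          cases u with
          | inl x =>
            have h2 := (htree₁.isConnected.preconnected x r₁).map hom₁
            have h3 : ∀ y, hom₁ y = Sum.inl y := fun _ => rfl
            rwa [h3, h3] at h2
          | inr x =>
            have h2 := (htree₂.isConnected.preconnected x r₂).map hom₂
            have h3 : ∀ y, hom₂ y = Sum.inr y := fun _ => rfl
            rw [h3, h3] at h2
            exact h2.trans hedge.symm.reachable
        exact (key u).trans (key v).symm
    · refine isAcyclic_sup_edge (side := Sum.isLeft) ?_ (by simp) hAacyclic
      rintro a b (⟨_, x, y, _, rfl, rfl⟩ | ⟨_, x, y, _, rfl, rfl⟩) <;> rfl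
  refine ⟨G, Sum.elim (fun i => if i = r₁ then Bag₁ r₁ ∪ Bag₂ r₂ else Bag₁ i) Bag₂,
    htreeG, by simp, ?_, fun j => rfl, ?_⟩
  · intro i
    by_cases hi : i = r₁
    · subst hi; exact Or.inr ⟨rfl, by simp⟩
    · exact Or.inl (by simp [hi])
  · intro S
    by_cases h2 : ∃ j, S ∈ Bag₂ j
    · have hL : ∀ i, S ∉ Bag₁ i := by
        obtain ⟨j, hj⟩ := h2
        exact fun i hi => hdisj S i j hi hj
      by_cases hr2 : S ∈ Bag₂ r₂
      · refine preconnected_induce_hub (f := Sum.inr) (n₀ := Sum.inl r₁) (r := r₂) ?_ hr2 hedge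
          (fun a _ b _ h => hadj₂ a b h) (hpre₂ S)
        ext o
        cases o with
        | inl i =>
          by_cases hi : i = r₁ <;>
            simp [hi, hr2, hL i]
        | inr j => simp
      · refine preconnected_induce_image (f := Sum.inr) ?_
          (fun a _ b _ h => hadj₂ a b h) (hpre₂ S)
        ext o
        cases o with
        | inl i =>
          by_cases hi : i = r₁ <;>
            simp [hi, hr2, hL i, hL r₁]
        | inr j => simp
    · push_neg at h2
      refine preconnected_induce_image (f := Sum.inl) ?_
        (fun a _ b _ h => hadj₁ a b h) (hpre₁ S)
      ext o
      cases o with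
      | inl i =>
        by_cases hi : i = r₁ <;>
          simp [hi, h2 r₂]
      | inr j => simp [h2 j]

namespace SCDLemmas

lemma labels_subset_allLabels : ∀ T : SCD V, T.labels ⊆ T.allLabels := by
  intro T
  induction T with
  | leaf v => simp [SCD.labels, SCD.allLabels]
  | union l r ihl ihr =>
    simp only [SCD.labels, SCD.allLabels]
    exact Finset.union_subset_union ihl ihr
  | addVertex t v ih =>
    simp only [SCD.labels, SCD.allLabels]
    exact Finset.union_subset_union ih (le_refl _)
  | unite t S₁ S₂ ih =>
    simp only [SCD.labels, SCD.allLabels]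
    exact Finset.union_subset_union ((Finset.sdiff_subset).trans ih) (le_refl _)
  | addAdj t S₁ S₂ ih =>
    simp only [SCD.labels, SCD.allLabels]
    exact ih

lemma allLabels_nonempty_subset : ∀ T : SCD V, T.WF →
    ∀ S ∈ T.allLabels, S.Nonempty ∧ S ⊆ T.verts := by
  intro T
  induction T with
  | leaf v =>
    intro _ S hS
    simp only [SCD.allLabels, Finset.mem_singleton] at hS
    subst hS
    simp [SCD.verts]
  | union l r ihl ihr =>
    rintro ⟨hl, hr, _⟩ S hS
    simp only [SCD.allLabels, Finset.mem_union] at hS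
    simp only [SCD.verts]
    rcases hS with h | h
    · obtain ⟨h1, h2⟩ := ihl hl S h
      exact ⟨h1, h2.trans Finset.subset_union_left⟩
    · obtain ⟨h1, h2⟩ := ihr hr S h
      exact ⟨h1, h2.trans Finset.subset_union_right⟩
  | addVertex t v ih =>
    rintro ⟨hw, _⟩ S hS
    simp only [SCD.allLabels, Finset.mem_union, Finset.mem_singleton] at hS
    simp only [SCD.verts]
    rcases hS with h | rfl
    · obtain ⟨h1, h2⟩ := ih hw S h
      exact ⟨h1, h2.trans Finset.subset_union_left⟩
    · exact ⟨Finset.singleton_nonempty v, by simp⟩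
  | unite t S₁ S₂ ih =>
    rintro ⟨hw, h1, h2, _⟩ S hS
    simp only [SCD.allLabels, Finset.mem_union, Finset.mem_singleton] at hS
    simp only [SCD.verts]
    rcases hS with h | rfl
    · exact ih hw S h
    · obtain ⟨hne1, hsub1⟩ := ih hw S₁ (labels_subset_allLabels t h1)
      obtain ⟨_, hsub2⟩ := ih hw S₂ (labels_subset_allLabels t h2)
      exact ⟨hne1.mono Finset.subset_union_left, Finset.union_subset hsub1 hsub2⟩
  | addAdj t S₁ S₂ ih =>
    rintro ⟨hw, _⟩ S hS
    exact ih hw S hS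

lemma labels_card_le_width : ∀ T : SCD V, T.labels.card ≤ T.width := by
  intro T
  cases T with
  | leaf v => simp [SCD.labels, SCD.width]
  | union l r => simp only [SCD.labels, SCD.width]; exact le_max_right _ _
  | addVertex t v => simp only [SCD.labels, SCD.width]; exact le_max_right _ _
  | unite t S₁ S₂ => simp only [SCD.labels, SCD.width]; exact le_max_right _ _
  | addAdj t S₁ S₂ => simp only [SCD.labels, SCD.width]; exact (labels_card_le_width t)

lemma labels_pairwise_disjoint : ∀ T : SCD V, T.WF →
    ∀ A ∈ T.labels, ∀ B ∈ T.labels, A ≠ B → Disjoint A B := by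
  intro T
  induction T with
  | leaf v =>
    intro _ A hA B hB hAB
    simp only [SCD.labels, Finset.mem_singleton] at hA hB
    exact absurd (hA.trans hB.symm) hAB
  | union l r ihl ihr =>
    rintro ⟨hl, hr, hd⟩ A hA B hB hAB
    simp only [SCD.labels, Finset.mem_union] at hA hB
    have lsub : ∀ X, X ∈ l.labels → X ⊆ l.verts :=
      fun X hX => (allLabels_nonempty_subset l hl X (labels_subset_allLabels l hX)).2
    have rsub : ∀ X, X ∈ r.labels → X ⊆ r.verts :=
      fun X hX => (allLabels_nonempty_subset r hr X (labels_subset_allLabels r hX)).2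
    rcases hA with hA | hA <;> rcases hB with hB | hB
    · exact ihl hl A hA B hB hAB
    · exact Finset.disjoint_of_subset_left (lsub A hA)
        (Finset.disjoint_of_subset_right (rsub B hB) hd)
    · exact Finset.disjoint_of_subset_left (rsub A hA)
        (Finset.disjoint_of_subset_right (lsub B hB) hd.symm)
    · exact ihr hr A hA B hB hAB
  | addVertex t v ih =>
    rintro ⟨hw, hv⟩ A hA B hB hAB
    simp only [SCD.labels, Finset.mem_union, Finset.mem_singleton] at hA hB
    have tsub : ∀ X, X ∈ t.labels → X ⊆ t.verts :=
      fun X hX => (allLabels_nonempty_subset t hw X (labels_subset_allLabels t hX)).2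
    have hdv : ∀ X, X ∈ t.labels → Disjoint X {v} := by
      intro X hX
      rw [Finset.disjoint_singleton_right]
      exact fun hvX => hv (tsub X hX hvX)
    rcases hA with hA | rfl <;> rcases hB with hB | rfl
    · exact ih hw A hA B hB hAB
    · exact hdv A hA
    · exact (hdv B hB).symm
    · exact absurd rfl hAB
  | unite t S₁ S₂ ih =>
    rintro ⟨hw, h1, h2, h12⟩ A hA B hB hAB
    simp only [SCD.labels, Finset.mem_union, Finset.mem_sdiff, Finset.mem_insert,
      Finset.mem_singleton] at hA hB
    have key : ∀ X, X ∈ t.labels ∧ ¬(X = S₁ ∨ X = S₂) → Disjoint X (S₁ ∪ S₂) := by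
      rintro X ⟨hX, hX12⟩
      push_neg at hX12
      rw [Finset.disjoint_union_right]
      exact ⟨ih hw X hX S₁ h1 hX12.1, ih hw X hX S₂ h2 hX12.2⟩
    rcases hA with hA | rfl <;> rcases hB with hB | rfl
    · exact ih hw A hA.1 B hB.1 hAB
    · exact key A hA
    · exact (key B hB).symm
    · exact absurd rfl hAB
  | addAdj t S₁ S₂ ih =>
    rintro ⟨hw, _⟩ A hA B hB hAB
    exact ih hw A hA B hB hAB

lemma allLabels_subset_some_label : ∀ T : SCD V, T.WF →
    ∀ S ∈ T.allLabels, ∃ L ∈ T.labels, S ⊆ L := by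
  intro T
  induction T with
  | leaf v =>
    intro _ S hS
    simp only [SCD.allLabels, Finset.mem_singleton] at hS
    exact ⟨S, by simp [SCD.labels, hS], le_refl _⟩
  | union l r ihl ihr =>
    rintro ⟨hl, hr, _⟩ S hS
    simp only [SCD.allLabels, Finset.mem_union] at hS
    simp only [SCD.labels]
    rcases hS with h | h
    · obtain ⟨L, hL, hsub⟩ := ihl hl S h
      exact ⟨L, Finset.mem_union_left _ hL, hsub⟩
    · obtain ⟨L, hL, hsub⟩ := ihr hr S h
      exact ⟨L, Finset.mem_union_right _ hL, hsub⟩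
  | addVertex t v ih =>
    rintro ⟨hw, _⟩ S hS
    simp only [SCD.allLabels, Finset.mem_union, Finset.mem_singleton] at hS
    simp only [SCD.labels]
    rcases hS with h | rfl
    · obtain ⟨L, hL, hsub⟩ := ih hw S h
      exact ⟨L, Finset.mem_union_left _ hL, hsub⟩
    · exact ⟨{v}, by simp, le_refl _⟩
  | unite t S₁ S₂ ih =>
    rintro ⟨hw, h1, h2, _⟩ S hS
    simp only [SCD.allLabels, Finset.mem_union, Finset.mem_singleton] at hS
    simp only [SCD.labels]
    rcases hS with h | rfl
    · obtain ⟨L, hL, hsub⟩ := ih hw S h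
      by_cases hL12 : L = S₁ ∨ L = S₂
      · refine ⟨S₁ ∪ S₂, Finset.mem_union_right _ (Finset.mem_singleton_self _), ?_⟩
        rcases hL12 with rfl | rfl
        · exact hsub.trans Finset.subset_union_left
        · exact hsub.trans Finset.subset_union_right
      · refine ⟨L, Finset.mem_union_left _ ?_, hsub⟩
        rw [Finset.mem_sdiff]
        refine ⟨hL, ?_⟩
        simp only [Finset.mem_insert, Finset.mem_singleton]
        exact hL12
    · exact ⟨S₁ ∪ S₂, Finset.mem_union_right _ (Finset.mem_singleton_self _), le_refl _⟩
  | addAdj t S₁ S₂ ih =>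
    rintro ⟨hw, _⟩ S hS
    exact ih hw S hS

lemma fresh_union_label {t : SCD V} {S₁ S₂ : Finset V} (hw : t.WF)
    (h1 : S₁ ∈ t.labels) (h2 : S₂ ∈ t.labels) (h12 : S₁ ≠ S₂) :
    S₁ ∪ S₂ ∉ t.allLabels := by
  intro hmem
  obtain ⟨L, hL, hsub⟩ := allLabels_subset_some_label t hw _ hmem
  have hne1 : S₁.Nonempty :=
    (allLabels_nonempty_subset t hw S₁ (labels_subset_allLabels t h1)).1
  have hne2 : S₂.Nonempty :=
    (allLabels_nonempty_subset t hw S₂ (labels_subset_allLabels t h2)).1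
  have e1 : S₁ = L := by
    by_contra hne
    have := labels_pairwise_disjoint t hw S₁ h1 L hL hne
    have : Disjoint S₁ S₁ := Finset.disjoint_of_subset_right
      (Finset.subset_union_left.trans hsub) this
    exact hne1.ne_empty (by simpa [disjoint_self, Finset.bot_eq_empty] using this)
  have e2 : S₂ = L := by
    by_contra hne
    have := labels_pairwise_disjoint t hw S₂ h2 L hL hne
    have : Disjoint S₂ S₂ := Finset.disjoint_of_subset_right
      (Finset.subset_union_right.trans hsub) this
    exact hne2.ne_empty (by simpa [disjoint_self, Finset.bot_eq_empty] using this)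
  exact h12 (e1.trans e2.symm)

end SCDLemmas

namespace SCDLemmas

lemma good : ∀ T : SCD V, T.WF →
    ∃ (ι : Type) (_ : Fintype ι) (G : SimpleGraph ι) (Bag : ι → Finset (Finset V)) (r : ι),
      G.IsTree ∧ Bag r = T.labels ∧ (∀ i, Bag i ⊆ T.allLabels) ∧
      (∀ S ∈ T.allLabels, ∃ i, S ∈ Bag i) ∧
      (∀ A B, T.isChild A B → ∃ i, A ∈ Bag i ∧ B ∈ Bag i) ∧
      (∀ A B, T.isAdjArc A B → ∃ i, A ∈ Bag i ∧ B ∈ Bag i) ∧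
      (∀ S, (G.induce {i | S ∈ Bag i}).Preconnected) ∧
      (∀ i, (Bag i).card ≤ T.width + 1) := by
  intro T
  induction T with
  | leaf v =>
    intro _
    refine ⟨PUnit, inferInstance, ⊥, fun _ => {{v}}, PUnit.unit, ?_, by simp [SCD.labels],
      ?_, ?_, ?_, ?_, ?_, ?_⟩
    · constructor
      · constructor
        intro u v
        rw [Subsingleton.elim u v]
      · exact SimpleGraph.isAcyclic_bot
    · intro i
      simp [SCD.allLabels]
    · intro S hS
      simp only [SCD.allLabels, Finset.mem_singleton] at hS
      exact ⟨PUnit.unit, by simp [hS]⟩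
    · intro A B h
      simp only [SCD.isChild] at h
    · intro A B h
      simp only [SCD.isAdjArc] at h
    · intro S
      exact preconnected_induce_subsingleton fun a _ b _ => Subsingleton.elim a b
    · intro i
      simp [SCD.width]
  | union l r ihl ihr =>
    rintro ⟨hl, hr, hd⟩
    obtain ⟨ι₁, f₁, G₁, Bag₁, r₁, ht₁, hroot₁, hall₁, hcov₁, hch₁, harc₁, hpre₁, hcard₁⟩ := ihl hl
    obtain ⟨ι₂, f₂, G₂, Bag₂, r₂, ht₂, hroot₂, hall₂, hcov₂, hch₂, harc₂, hpre₂, hcard₂⟩ := ihr hr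
    have hdisj : ∀ (S : Finset V) (i : ι₁) (j : ι₂), S ∈ Bag₁ i → S ∈ Bag₂ j → False := by
      intro S i j hi hj
      obtain ⟨hne, hsubl⟩ := allLabels_nonempty_subset l hl S (hall₁ i hi)
      obtain ⟨_, hsubr⟩ := allLabels_nonempty_subset r hr S (hall₂ j hj)
      have : Disjoint S S := Finset.disjoint_of_subset_left hsubl
        (Finset.disjoint_of_subset_right hsubr hd)
      exact hne.ne_empty (by simpa [disjoint_self, Finset.bot_eq_empty] using this)
    obtain ⟨G, Bag, htG, hBroot, hdich, hBinr, hpre⟩ :=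
      link_step G₁ G₂ Bag₁ Bag₂ r₁ r₂ ht₁ ht₂ hpre₁ hpre₂ hdisj
    have hsubl : ∀ i, Bag₁ i ⊆ Bag (Sum.inl i) := by
      intro i
      rcases hdich i with h | ⟨hir, h⟩
      · rw [h]
      · subst hir
        rw [h]
        exact Finset.subset_union_left
    haveI : Fintype (ι₁ ⊕ ι₂) := @instFintypeSum _ _ f₁ f₂
    refine ⟨ι₁ ⊕ ι₂, inferInstance, G, Bag, Sum.inl r₁, htG, ?_, ?_, ?_, ?_, ?_, hpre, ?_⟩
    · rw [hBroot, hroot₁, hroot₂]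
      rfl
    · intro i
      have hURsub : Bag₁ r₁ ∪ Bag₂ r₂ ⊆ (l.union r).allLabels := by
        simp only [SCD.allLabels]
        exact Finset.union_subset
          ((hall₁ r₁).trans Finset.subset_union_left)
          ((hall₂ r₂).trans Finset.subset_union_right)
      cases i with
      | inl i =>
        rcases hdich i with h | ⟨_, h⟩
        · rw [h]
          exact (hall₁ i).trans (by simp only [SCD.allLabels]; exact Finset.subset_union_left)
        · rw [h]; exact hURsub
      | inr j =>
        rw [hBinr j]
        exact (hall₂ j).trans (by simp only [SCD.allLabels]; exact Finset.subset_union_right)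
    · intro S hS
      simp only [SCD.allLabels, Finset.mem_union] at hS
      rcases hS with h | h
      · obtain ⟨i, hi⟩ := hcov₁ S h
        exact ⟨Sum.inl i, hsubl i hi⟩
      · obtain ⟨j, hj⟩ := hcov₂ S h
        exact ⟨Sum.inr j, by rw [hBinr j]; exact hj⟩
    · intro A B h
      simp only [SCD.isChild] at h
      rcases h with h | h
      · obtain ⟨i, hA, hB⟩ := hch₁ A B h
        exact ⟨Sum.inl i, hsubl i hA, hsubl i hB⟩
      · obtain ⟨j, hA, hB⟩ := hch₂ A B h
        exact ⟨Sum.inr j, by rw [hBinr j]; exact hA, by rw [hBinr j]; exact hB⟩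
    · intro A B h
      simp only [SCD.isAdjArc] at h
      rcases h with h | h
      · obtain ⟨i, hA, hB⟩ := harc₁ A B h
        exact ⟨Sum.inl i, hsubl i hA, hsubl i hB⟩
      · obtain ⟨j, hA, hB⟩ := harc₂ A B h
        exact ⟨Sum.inr j, by rw [hBinr j]; exact hA, by rw [hBinr j]; exact hB⟩
    · have hwl : l.width ≤ (l.union r).width := by
        simp only [SCD.width]
        exact le_trans (le_max_left _ _) (le_max_left _ _)
      have hwr : r.width ≤ (l.union r).width := by
        simp only [SCD.width]
        exact le_trans (le_max_right _ _) (le_max_left _ _)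
      intro i
      cases i with
      | inl i =>
        rcases hdich i with h | ⟨_, h⟩
        · rw [h]
          exact le_trans (hcard₁ i) (by omega)
        · rw [h]
          have : Bag₁ r₁ ∪ Bag₂ r₂ = (l.union r).labels := by
            rw [hroot₁, hroot₂]; rfl
          rw [this]
          exact le_trans (labels_card_le_width _) (by omega)
      | inr j =>
        rw [hBinr j]
        exact le_trans (hcard₂ j) (by omega)
  | addVertex t v ih =>
    rintro ⟨hw, hv⟩
    obtain ⟨ι₀, f₀, G₀, Bag₀, r₀, ht₀, hroot₀, hall₀, hcov₀, hch₀, harc₀, hpre₀, hcard₀⟩ := ih hw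
    have hnew : ∀ S ∈ t.labels ∪ {{v}}, S ∈ Bag₀ r₀ ∨ ∀ i, S ∉ Bag₀ i := by
      intro S hS
      rcases Finset.mem_union.mp hS with h | h
      · left; rw [hroot₀]; exact h
      · right
        rw [Finset.mem_singleton] at h
        subst h
        intro i hi
        obtain ⟨_, hsub⟩ := allLabels_nonempty_subset t hw _ (hall₀ i hi)
        exact hv (hsub (Finset.mem_singleton_self v))
    obtain ⟨G, Bag, htG, hBnone, hBsome, hpre⟩ :=
      extend_step G₀ Bag₀ r₀ (t.labels ∪ {{v}}) ht₀ hpre₀ hnew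
    haveI : Fintype (Option ι₀) := @instFintypeOption _ f₀
    have hwt : t.width ≤ (t.addVertex v).width := le_max_left _ _
    refine ⟨Option ι₀, inferInstance, G, Bag, none, htG, hBnone, ?_, ?_, ?_, ?_, hpre, ?_⟩
    · intro i
      cases i with
      | none =>
        rw [hBnone]
        simp only [SCD.allLabels]
        exact Finset.union_subset_union (labels_subset_allLabels t) (le_refl _)
      | some i =>
        rw [hBsome i]
        exact (hall₀ i).trans (by simp only [SCD.allLabels]; exact Finset.subset_union_left)
    · intro S hS
      simp only [SCD.allLabels, Finset.mem_union, Finset.mem_singleton] at hS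
      rcases hS with h | rfl
      · obtain ⟨i, hi⟩ := hcov₀ S h
        exact ⟨some i, by rw [hBsome i]; exact hi⟩
      · exact ⟨none, by rw [hBnone]; exact Finset.mem_union_right _ (Finset.mem_singleton_self _)⟩
    · intro A B h
      simp only [SCD.isChild] at h
      obtain ⟨i, hA, hB⟩ := hch₀ A B h
      exact ⟨some i, by rw [hBsome i]; exact hA, by rw [hBsome i]; exact hB⟩
    · intro A B h
      simp only [SCD.isAdjArc] at h
      obtain ⟨i, hA, hB⟩ := harc₀ A B h
      exact ⟨some i, by rw [hBsome i]; exact hA, by rw [hBsome i]; exact hB⟩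
    · intro i
      cases i with
      | none =>
        rw [hBnone]
        have : t.labels ∪ {{v}} = (t.addVertex v).labels := rfl
        rw [this]
        exact le_trans (labels_card_le_width _) (by omega)
      | some i =>
        rw [hBsome i]
        exact le_trans (hcard₀ i) (by omega)
  | unite t S₁ S₂ ih =>
    rintro ⟨hw, h1, h2, h12⟩
    obtain ⟨ι₀, f₀, G₀, Bag₀, r₀, ht₀, hroot₀, hall₀, hcov₀, hch₀, harc₀, hpre₀, hcard₀⟩ := ih hw
    have hfresh := fresh_union_label hw h1 h2 h12
    have hnew1 : ∀ S ∈ t.labels ∪ {S₁ ∪ S₂}, S ∈ Bag₀ r₀ ∨ ∀ i, S ∉ Bag₀ i := by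
      intro S hS
      rcases Finset.mem_union.mp hS with h | h
      · left; rw [hroot₀]; exact h
      · right
        rw [Finset.mem_singleton] at h
        subst h
        intro i hi
        exact hfresh (hall₀ i hi)
    obtain ⟨G', Bag', htG', hB'none, hB'some, hpre'⟩ :=
      extend_step G₀ Bag₀ r₀ (t.labels ∪ {S₁ ∪ S₂}) ht₀ hpre₀ hnew1
    have hnew2 : ∀ S ∈ (t.labels \ {S₁, S₂}) ∪ {S₁ ∪ S₂},
        S ∈ Bag' none ∨ ∀ i, S ∉ Bag' i := by
      intro S hS
      left
      rw [hB'none]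
      rcases Finset.mem_union.mp hS with h | h
      · exact Finset.mem_union_left _ (Finset.mem_sdiff.mp h).1
      · exact Finset.mem_union_right _ h
    obtain ⟨G, Bag, htG, hBnone, hBsome, hpre⟩ :=
      extend_step G' Bag' none ((t.labels \ {S₁, S₂}) ∪ {S₁ ∪ S₂}) htG' hpre' hnew2
    haveI : Fintype (Option ι₀) := @instFintypeOption _ f₀
    haveI : Fintype (Option (Option ι₀)) := inferInstance
    have hwt : t.width ≤ (t.unite S₁ S₂).width := le_max_left _ _
    refine ⟨Option (Option ι₀), inferInstance, G, Bag, none, htG, hBnone, ?_, ?_, ?_, ?_, hpre, ?_⟩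
    · intro i
      match i with
      | none =>
        rw [hBnone]
        simp only [SCD.allLabels]
        exact Finset.union_subset_union ((Finset.sdiff_subset).trans (labels_subset_allLabels t))
          (le_refl _)
      | some none =>
        rw [hBsome none, hB'none]
        simp only [SCD.allLabels]
        exact Finset.union_subset_union (labels_subset_allLabels t) (le_refl _)
      | some (some i) =>
        rw [hBsome (some i), hB'some i]
        exact (hall₀ i).trans (by simp only [SCD.allLabels]; exact Finset.subset_union_left)
    · intro S hS
      simp only [SCD.allLabels, Finset.mem_union, Finset.mem_singleton] at hS
      rcases hS with h | rfl
      · obtain ⟨i, hi⟩ := hcov₀ S h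
        exact ⟨some (some i), by rw [hBsome (some i), hB'some i]; exact hi⟩
      · exact ⟨some none, by
          rw [hBsome none, hB'none]
          exact Finset.mem_union_right _ (Finset.mem_singleton_self _)⟩
    · intro A B h
      simp only [SCD.isChild] at h
      rcases h with h | ⟨hA, rfl⟩
      · obtain ⟨i, hA, hB⟩ := hch₀ A B h
        exact ⟨some (some i), by rw [hBsome (some i), hB'some i]; exact hA,
          by rw [hBsome (some i), hB'some i]; exact hB⟩
      · refine ⟨some none, ?_, ?_⟩
        · rw [hBsome none, hB'none]
          rcases hA with rfl | rfl
          · exact Finset.mem_union_left _ h1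
          · exact Finset.mem_union_left _ h2
        · rw [hBsome none, hB'none]
          exact Finset.mem_union_right _ (Finset.mem_singleton_self _)
    · intro A B h
      simp only [SCD.isAdjArc] at h
      obtain ⟨i, hA, hB⟩ := harc₀ A B h
      exact ⟨some (some i), by rw [hBsome (some i), hB'some i]; exact hA,
        by rw [hBsome (some i), hB'some i]; exact hB⟩
    · intro i
      match i with
      | none =>
        rw [hBnone]
        have : (t.labels \ {S₁, S₂}) ∪ {S₁ ∪ S₂} = (t.unite S₁ S₂).labels := rfl
        rw [this]
        exact le_trans (labels_card_le_width _) (by omega)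
      | some none =>
        rw [hBsome none, hB'none]
        have h3 : (t.labels ∪ {S₁ ∪ S₂}).card ≤ t.labels.card + 1 := by
          refine le_trans (Finset.card_union_le _ _) ?_
          simp
        have h4 := labels_card_le_width t
        omega
      | some (some i) =>
        rw [hBsome (some i), hB'some i]
        exact le_trans (hcard₀ i) (by omega)
  | addAdj t S₁ S₂ ih =>
    rintro ⟨hw, h1, h2, _⟩
    obtain ⟨ι₀, f₀, G₀, Bag₀, r₀, ht₀, hroot₀, hall₀, hcov₀, hch₀, harc₀, hpre₀, hcard₀⟩ := ih hw
    have hnew : ∀ S ∈ t.labels, S ∈ Bag₀ r₀ ∨ ∀ i, S ∉ Bag₀ i := by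
      intro S hS
      left; rw [hroot₀]; exact hS
    obtain ⟨G, Bag, htG, hBnone, hBsome, hpre⟩ :=
      extend_step G₀ Bag₀ r₀ t.labels ht₀ hpre₀ hnew
    haveI : Fintype (Option ι₀) := @instFintypeOption _ f₀
    have hwt : t.width = (t.addAdj S₁ S₂).width := rfl
    refine ⟨Option ι₀, inferInstance, G, Bag, none, htG, hBnone, ?_, ?_, ?_, ?_, hpre, ?_⟩
    · intro i
      cases i with
      | none =>
        rw [hBnone]
        exact labels_subset_allLabels t
      | some i =>
        rw [hBsome i]
        exact hall₀ i
    · intro S hS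
      obtain ⟨i, hi⟩ := hcov₀ S hS
      exact ⟨some i, by rw [hBsome i]; exact hi⟩
    · intro A B h
      simp only [SCD.isChild] at h
      obtain ⟨i, hA, hB⟩ := hch₀ A B h
      exact ⟨some i, by rw [hBsome i]; exact hA, by rw [hBsome i]; exact hB⟩
    · intro A B h
      simp only [SCD.isAdjArc] at h
      rcases h with h | ⟨rfl, rfl⟩
      · obtain ⟨i, hA, hB⟩ := harc₀ A B h
        exact ⟨some i, by rw [hBsome i]; exact hA, by rw [hBsome i]; exact hB⟩
      · exact ⟨none, by rw [hBnone]; exact h1, by rw [hBnone]; exact h2⟩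
    · intro i
      cases i with
      | none =>
        rw [hBnone]
        exact le_trans (labels_card_le_width t) (by omega)
      | some i =>
        rw [hBsome i]
        exact le_trans (hcard₀ i) (by omega)

end SCDLemmas

end RepresentationAux

/-- The representation graph of a simplified clique decomposition of width `k`
has treewidth at most `k`: there is a tree decomposition (a tree `G` with bags
of labels covering all vertices and edges of `H`, the bags containing any fixed
label inducing a connected subtree) all of whose bags have at most `k + 1`
elements. -/
theorem representation_graph_treewidth (T : SCD V) (hWF : T.WF) (k : ℕ)
    (hw : T.width ≤ k) :
    ∃ (N : ℕ) (G : SimpleGraph (Fin N)) (Bag : Fin N → Finset (Finset V)),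
      G.IsTree ∧
      (∀ S ∈ T.allLabels, ∃ i, S ∈ Bag i) ∧
      (∀ A B : Finset V, repAdj T A B → ∃ i, A ∈ Bag i ∧ B ∈ Bag i) ∧
      (∀ S : Finset V, (G.induce {i | S ∈ Bag i}).Preconnected) ∧
      (∀ i, (Bag i).card ≤ k + 1) := by
  obtain ⟨ι, fι, G, Bag, r, htree, _, _, hcov, hch, harc, hpre, hcard⟩ := SCDLemmas.good T hWF
  haveI := fι
  set N := Fintype.card ι with hN
  set e : ι ≃ Fin N := Fintype.equivFin ι with he
  have hGadj : ∀ a b : ι, G.Adj a b → (G.map e.toEmbedding).Adj (e a) (e b) :=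
    fun a b h => ⟨e.injective.ne h.ne, a, b, h, rfl, rfl⟩
  have htree' : (G.map e.toEmbedding).IsTree := by
    constructor
    · let hom : G →g G.map e.toEmbedding := ⟨e, fun h => hGadj _ _ h⟩
      refine htree.isConnected.map hom ?_
      intro y
      exact ⟨e.symm y, e.apply_symm_apply y⟩
    · intro u c hc
      refine no_cycle_of_pullback (f := e.toEmbedding) hGadj ?_
        (fun u c hc => (htree.IsAcyclic c hc).elim) c hc ⟨e.symm u, by simp⟩
      rintro a b ⟨_, x, y, hxy, hx, hy⟩
      have hx' : x = a := e.injective hx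
      subst hx'
      exact ⟨y, hy.symm, hxy⟩
  refine ⟨N, G.map e.toEmbedding, fun i => Bag (e.symm i), htree', ?_, ?_, ?_, ?_⟩
  · intro S hS
    obtain ⟨i, hi⟩ := hcov S hS
    exact ⟨e i, by simpa using hi⟩
  · rintro A B ⟨hne, h | h | h | h⟩
    · obtain ⟨i, hA, hB⟩ := hch A B h
      exact ⟨e i, by simpa using hA, by simpa using hB⟩
    · obtain ⟨i, hA, hB⟩ := hch B A h
      exact ⟨e i, by simpa using hB, by simpa using hA⟩
    · obtain ⟨i, hA, hB⟩ := harc A B h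
      exact ⟨e i, by simpa using hA, by simpa using hB⟩
    · obtain ⟨i, hA, hB⟩ := harc B A h
      exact ⟨e i, by simpa using hB, by simpa using hA⟩
  · intro S
    refine preconnected_induce_image (f := e) ?_ (fun a _ b _ h => hGadj a b h) (hpre S)
    ext j
    simp only [Set.mem_setOf_eq, Set.mem_image]
    constructor
    · intro h
      exact ⟨e.symm j, h, by simp⟩
    · rintro ⟨i, hi, rfl⟩
      simpa using hi
  · intro i
    exact le_trans (hcard (e.symm i)) (by omega)
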